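/- If H is a G-free k-critical graph (i.e., χ_G(H) = k and every proper subgraph H' of H satisfies χ_G(H') ≤ k−1), then the minimum degree of H satisfies δ(H) ≥ δ(G)·(k−1). -/

import Mathlib

open SimpleGraph

/-- `H` contains a copy of `G`: an injective map preserving adjacency. -/
def ContainsCopy {α β : Type*} (G : SimpleGraph α) (H : SimpleGraph β) : Prop :=
  ∃ f : α ↪ β, ∀ a b, G.Adj a b → H.Adj (f a) (f b)

/-- `H` is `G`-free. -/
def GFree {α β : Type*} (G : SimpleGraph α) (H : SimpleGraph β) : Prop :=
  ¬ ContainsCopy G H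

/-- The `G`-free chromatic number of `H`. -/
noncomputable def gChrom {α β : Type*} (G : SimpleGraph α) (H : SimpleGraph β) : ℕ :=
  sInf {k | ∃ c : β → Fin k, ∀ i, GFree G (H.induce {v | c v = i})}

/-- `H` is `G`-free `k`-critical. -/
def GFreeCritical {α β : Type*} (G : SimpleGraph α) (H : SimpleGraph β) (k : ℕ) : Prop :=
  gChrom G H = k ∧ ∀ F : H.Subgraph, F ≠ ⊤ → gChrom G F.coe ≤ k - 1

lemma copy_trans {α β γ : Type*} {G : SimpleGraph α} {H₁ : SimpleGraph β} {H₂ : SimpleGraph γ}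
    (g : β ↪ γ) (hg : ∀ a b, H₁.Adj a b → H₂.Adj (g a) (g b)) :
    ContainsCopy G H₁ → ContainsCopy G H₂ := by
  rintro ⟨f, hf⟩
  exact ⟨f.trans g, fun a b hab => hg _ _ (hf a b hab)⟩

lemma gfree_extend {α γ : Type*} [Nonempty α] (G : SimpleGraph α) (I : SimpleGraph γ)
    {m n : ℕ} (hmn : m ≤ n)
    (h : ∃ c : γ → Fin m, ∀ i, GFree G (I.induce {v | c v = i})) :
    ∃ c : γ → Fin n, ∀ i, GFree G (I.induce {v | c v = i}) := by
  obtain ⟨c, hc⟩ := h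
  refine ⟨fun v => Fin.castLE hmn (c v), fun i => ?_⟩
  by_cases hi : i.val < m
  · have hset : {v | Fin.castLE hmn (c v) = i} = {v | c v = ⟨i.val, hi⟩} := by
      ext v
      simp [Fin.ext_iff]
    rw [hset]
    exact hc _
  · rintro ⟨f, -⟩
    have h2 := (f (Classical.arbitrary α)).2
    simp only [Set.mem_setOf_eq] at h2
    have h3 := congrArg Fin.val h2
    simp only [Fin.coe_castLE] at h3
    exact hi (h3 ▸ (c _).isLt)

theorem stmt0 {α β : Type*} [Fintype α] [Fintype β] [Nonempty α] [Nonempty β]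
    (G : SimpleGraph α) (H : SimpleGraph β) [DecidableRel G.Adj] [DecidableRel H.Adj]
    (k : ℕ) (h : GFreeCritical G H k) :
    G.minDegree * (k - 1) ≤ H.minDegree := by
  classical
  obtain ⟨hk, hcrit⟩ := h
  rcases Nat.lt_or_ge k 2 with hk2 | hk2
  · have hk1 : k - 1 = 0 := by omega
    simp [hk1]
  obtain ⟨n, hn⟩ : ∃ n, n = k - 1 := ⟨_, rfl⟩
  obtain ⟨d, hd⟩ : ∃ d, d = G.minDegree := ⟨_, rfl⟩
  have hn1 : 1 ≤ n := by omega
  rw [← hn, ← hd]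
  by_contra hcon
  push_neg at hcon
  obtain ⟨v, hv⟩ := H.exists_minimal_degree_vertex
  have hdeg : H.degree v < d * n := hv ▸ hcon
  have hSH : sInf {m | ∃ c : β → Fin m, ∀ i, GFree G (H.induce {u | c u = i})} = k := hk
  have hne : {m | ∃ c : β → Fin m, ∀ i, GFree G (H.induce {u | c u = i})}.Nonempty := by
    by_contra hne
    rw [Set.not_nonempty_iff_eq_empty] at hne
    rw [hne, Nat.sInf_empty] at hSH
    omega
  have hkmem : k ∈ {m | ∃ c : β → Fin m, ∀ i, GFree G (H.induce {u | c u = i})} :=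
    hSH ▸ Nat.sInf_mem hne
  obtain ⟨c₀, hc₀⟩ := hkmem
  -- the subgraph obtained by deleting v
  let F : H.Subgraph :=
    { verts := {v}ᶜ
      Adj := fun a b => H.Adj a b ∧ a ≠ v ∧ b ≠ v
      adj_sub := fun h => h.1
      edge_vert := fun h => h.2.1
      symm := ⟨fun a b h => ⟨h.1.symm, h.2.2, h.2.1⟩⟩ }
  have hvF : v ∉ F.verts := by simp [F]
  have hFne : F ≠ ⊤ := by
    intro hF
    apply hvF
    rw [hF, SimpleGraph.Subgraph.verts_top]
    trivial
  have hF1 : gChrom G F.coe ≤ n := hn ▸ hcrit F hFne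
  -- restrict c₀ to F, showing the coloring set for F is nonempty
  have hkF : ∃ c : ↥F.verts → Fin k, ∀ i, GFree G (F.coe.induce {w | c w = i}) := by
    refine ⟨fun w => c₀ w.val, fun i => ?_⟩
    intro hcopy
    apply hc₀ i
    refine copy_trans ⟨fun w => ⟨w.val.val, w.prop⟩, ?_⟩ ?_ hcopy
    · rintro ⟨⟨a, ha⟩, ha'⟩ ⟨⟨b, hb⟩, hb'⟩ hab
      simp only [Subtype.mk.injEq] at hab
      simp [hab]
    · rintro ⟨⟨a, ha⟩, ha'⟩ ⟨⟨b, hb⟩, hb'⟩ hab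
      simp only [comap_adj, Function.Embedding.coe_subtype, Subgraph.coe_adj] at hab ⊢
      exact hab.1
  have hSF : {m | ∃ c : ↥F.verts → Fin m, ∀ i, GFree G (F.coe.induce {w | c w = i})}.Nonempty :=
    ⟨k, hkF⟩
  have hmemF := Nat.sInf_mem hSF
  obtain ⟨c', hc'⟩ := gfree_extend G F.coe hF1 hmemF
  -- total coloring helper
  have hn0 : 0 < n := hn1
  let g : β → Fin n := fun u => if h : u ∈ F.verts then c' ⟨u, h⟩ else ⟨0, hn0⟩
  -- pigeonhole
  let T : Fin n → Finset β := fun i => (H.neighborFinset v).filter (fun u => g u = i)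
  have hsum : ∑ i, (T i).card = H.degree v := by
    rw [SimpleGraph.degree]
    exact (Finset.card_eq_sum_card_fiberwise (fun x _ => Finset.mem_univ (g x))).symm
  have hex : ∃ i₀ : Fin n, (T i₀).card < d := by
    by_contra hno
    push_neg at hno
    have hle : d * n ≤ ∑ i, (T i).card := by
      calc d * n = ∑ _i : Fin n, d := by simp [mul_comm]
        _ ≤ ∑ i, (T i).card := Finset.sum_le_sum (fun i _ => hno i)
    rw [hsum] at hle
    exact absurd hdeg (not_lt.mpr hle)
  obtain ⟨i₀, hT⟩ := hex
  -- the final (k-1)-coloring of H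
  let c : β → Fin n := fun u => if u = v then i₀ else g u
  have hgood : ∀ i, GFree G (H.induce {u | c u = i}) := by
    intro i
    rintro ⟨f, hf⟩
    by_cases hvi : ∃ a, ((f a : {u // u ∈ {u | c u = i}}) : β) = v
    · -- v is in the image: count neighbors
      obtain ⟨a₀, ha₀⟩ := hvi
      have hci : c v = i := ha₀ ▸ (f a₀).prop
      have hii : i = i₀ := by
        have : c v = i₀ := if_pos rfl
        rw [← hci, this]
      have hinj : d ≤ (T i₀).card := by
        calc d ≤ G.degree a₀ := hd ▸ G.minDegree_le_degree a₀
          _ ≤ (T i₀).card := by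
            apply Finset.card_le_card_of_injOn (fun b => ((f b : {u // u ∈ {u | c u = i}}) : β))
            · intro b hb
              rw [Finset.mem_coe, SimpleGraph.mem_neighborFinset] at hb
              have hadj : (H.induce {u | c u = i}).Adj (f a₀) (f b) := hf _ _ hb
              have hadj' : H.Adj v ((f b : {u // u ∈ {u | c u = i}}) : β) := by
                have := hadj
                simp only [comap_adj, Function.Embedding.coe_subtype] at this
                rw [← ha₀]
                exact this
              have hneq : ((f b : {u // u ∈ {u | c u = i}}) : β) ≠ v := fun he => H.irrefl (he ▸ hadj')
              rw [Finset.mem_coe, Finset.mem_filter]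
              constructor
              · rw [SimpleGraph.mem_neighborFinset]; exact hadj'
              · have hcb : c ((f b : {u // u ∈ {u | c u = i}}) : β) = i := (f b).prop
                simp only [c, if_neg hneq] at hcb
                rw [hcb, hii]
            · intro b₁ _ b₂ _ he
              exact f.injective (Subtype.ext he)
      exact absurd hT (not_lt.mpr hinj)
    · -- v not in the image: get a copy in F's color class
      push_neg at hvi
      have hmemF' : ∀ a : α, ((f a : {u // u ∈ {u | c u = i}}) : β) ∈ F.verts := by
        intro a
        simp only [F, Set.mem_compl_iff, Set.mem_singleton_iff]
        exact hvi a
      have hcol : ∀ a : α, c' ⟨((f a : {u // u ∈ {u | c u = i}}) : β), hmemF' a⟩ = i := by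
        intro a
        have hcb : c ((f a : {u // u ∈ {u | c u = i}}) : β) = i := (f a).prop
        simp only [c, if_neg (hvi a), g, dif_pos (hmemF' a)] at hcb
        exact hcb
      refine hc' i ⟨⟨fun a => ⟨⟨((f a : {u // u ∈ {u | c u = i}}) : β), hmemF' a⟩, hcol a⟩, ?_⟩, ?_⟩
      · intro a b hab
        simp only [Subtype.mk.injEq] at hab
        exact f.injective (Subtype.ext hab)
      · intro a b hab
        have hadj := hf a b hab
        simp only [comap_adj, Function.Embedding.coe_subtype, Subgraph.coe_adj] at hadj ⊢
        exact ⟨hadj, hvi a, hvi b⟩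
  have hnmem : n ∈ {m | ∃ c : β → Fin m, ∀ i, GFree G (H.induce {u | c u = i})} := ⟨c, hgood⟩
  have hfin := Nat.sInf_le hnmem
  rw [hSH] at hfin
  exact absurd hfin (not_le.mpr (hn ▸ Nat.sub_lt (Nat.lt_of_lt_of_le Nat.zero_lt_two hk2) Nat.one_pos))
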